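/- Let F_q be a finite field of characteristic different from 2, and let a, b ∈ F_q be such that the polynomial x² − ax + b is irreducible over F_q and the discriminant Δ := a² − 4b satisfies Δ = −b. Let A₃ = [[0, −b], [1, a]] ∈ M₂(F_q). Then the only solutions X ∈ M₂(F_q) of XA₃X = A₃XA₃ are X = 0 and X = A₃; in particular |D_{A₃}(F_q)| = 2. -/

import Mathlib

/-- Over a finite field of odd characteristic, if `x² − ax + b` is irreducible and
`Δ = a² − 4b = −b`, then the only solutions of `X A₃ X = A₃ X A₃` for
`A₃ = [[0, −b], [1, a]]` are `X = 0` and `X = A₃`; in particular there are exactly two. -/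
theorem stmt_12 {F : Type*} [Field F] [Fintype F] (hchar : ringChar F ≠ 2) (a b : F)
    (hirr : Irreducible (Polynomial.X ^ 2 - Polynomial.C a * Polynomial.X + Polynomial.C b))
    (hΔ : a ^ 2 - 4 * b = -b) :
    {X : Matrix (Fin 2) (Fin 2) F |
        X * !![0, -b; 1, a] * X = !![0, -b; 1, a] * X * !![0, -b; 1, a]} =
      ({0, !![0, -b; 1, a]} : Set (Matrix (Fin 2) (Fin 2) F)) ∧
    Nat.card {X : Matrix (Fin 2) (Fin 2) F |
        X * !![0, -b; 1, a] * X = !![0, -b; 1, a] * X * !![0, -b; 1, a]} = 2 := by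
  have h2 : (2 : F) ≠ 0 := Ring.two_ne_zero hchar
  have hns : ∀ t : F, t ^ 2 ≠ -b := by
    intro t ht
    have hroot : Polynomial.IsRoot
        (Polynomial.X ^ 2 - Polynomial.C a * Polynomial.X + Polynomial.C b) ((a + t) / 2) := by
      simp only [Polynomial.IsRoot, Polynomial.eval_add, Polynomial.eval_sub, Polynomial.eval_mul,
        Polynomial.eval_pow, Polynomial.eval_X, Polynomial.eval_C]
      field_simp
      linear_combination ht - hΔ
    have hdeg1 := Polynomial.degree_eq_one_of_irreducible_of_root hirr hroot
    have hdeg : (Polynomial.X ^ 2 - Polynomial.C a * Polynomial.X + Polynomial.C b : Polynomial F).degree = 2 := by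
      compute_degree!
    rw [hdeg] at hdeg1
    exact (by norm_num : (2 : WithBot ℕ) ≠ 1) hdeg1
  have hb : b ≠ 0 := fun h => hns 0 (by simp [h])
  have ha2 : a ^ 2 = 3 * b := by linear_combination hΔ
  have h4 : (4 : F) ≠ 0 := by
    have := mul_ne_zero h2 h2
    norm_num at this
    exact this
  have hA0 : (0 : Matrix (Fin 2) (Fin 2) F) ≠ !![0, -b; 1, a] := by
    intro h
    have h10 := Matrix.ext_iff.mpr h 1 0
    simp at h10
  have hset : {X : Matrix (Fin 2) (Fin 2) F |
      X * !![0, -b; 1, a] * X = !![0, -b; 1, a] * X * !![0, -b; 1, a]} =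
      ({0, !![0, -b; 1, a]} : Set (Matrix (Fin 2) (Fin 2) F)) := by
    ext X
    simp only [Set.mem_setOf_eq, Set.mem_insert_iff, Set.mem_singleton_iff]
    constructor
    · intro hX
      obtain ⟨x, y, z, w, rfl⟩ : ∃ x y z w, X = !![x, y; z, w] :=
        ⟨_, _, _, _, Matrix.eta_fin_two X⟩
      rw [Matrix.mul_fin_two, Matrix.mul_fin_two, Matrix.mul_fin_two, Matrix.mul_fin_two] at hX
      have hE00 := Matrix.ext_iff.mpr hX 0 0
      have hE01 := Matrix.ext_iff.mpr hX 0 1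
      have hE10 := Matrix.ext_iff.mpr hX 1 0
      have hE11 := Matrix.ext_iff.mpr hX 1 1
      simp only [Matrix.cons_val', Matrix.cons_val_zero, Matrix.cons_val_one, Matrix.head_cons,
        Matrix.empty_val', Matrix.cons_val_fin_one, Matrix.head_fin_const,
        Matrix.of_apply] at hE00 hE01 hE10 hE11
      clear hX
      by_cases hc : b * (x - w) + a * (2 * b * z - 2 * y + a * (x - w)) = 0 ∧
          2 * y - a * (x - w) - b * z = 0
      · obtain ⟨hQ0, hQ1⟩ := hc
        have hwz : b * (x - w + a * z) = 0 := by linear_combination hQ0 + a * hQ1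
        have hw : w = x + a * z := by
          have h' := (mul_eq_zero.mp hwz).resolve_left hb
          linear_combination -h'
        subst hw
        have hy2 : (2 * b) * (y + b * z) = 0 := by
          linear_combination b * hQ1 + a * hQ0 + a ^ 2 * hQ1 - b * z * ha2
        have hy : y = -(b * z) := by
          have h' := (mul_eq_zero.mp hy2).resolve_left (mul_ne_zero h2 hb)
          linear_combination h'
        subst hy
        have hh2 : 2 * x * z + a * z ^ 2 - x - a * z = 0 := by
          have hb2 : b * (2 * x * z + a * z ^ 2 - x - a * z) = 0 := by
            linear_combination a * hE10 - hE11
          exact (mul_eq_zero.mp hb2).resolve_left hb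
        have hh1 : x ^ 2 - b * z ^ 2 + b * z = 0 := by
          have hb1 : b * (x ^ 2 - b * z ^ 2 + b * z) = 0 := by
            linear_combination (2 * a - (x + a * z)) * hE00 +
              (b + a ^ 2 - (x + a * z) * a) * hE10 + (-a + z * a + x) * hE11
          exact (mul_eq_zero.mp hb1).resolve_left hb
        have hkey : z * (z - 1) * (z ^ 2 - z + 1) = 0 := by
          have hbk : b * (z * (z - 1) * (z ^ 2 - z + 1)) = 0 := by
            linear_combination (-(2 * z - 1) ^ 2) * hh1 +
              (2 * x * z + a * z ^ 2 - x - a * z - 2 * a * z * (z - 1)) * hh2 +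
              z ^ 2 * (z - 1) ^ 2 * ha2
          exact (mul_eq_zero.mp hbk).resolve_left hb
        rcases mul_eq_zero.mp hkey with hz12 | hz3
        · rcases mul_eq_zero.mp hz12 with hz0 | hz1
          · left
            have hx : x = 0 := by
              have hx2 : x ^ 2 = 0 := by linear_combination hh1 + (b * z - b) * hz0
              exact pow_eq_zero_iff (by norm_num) |>.mp hx2
            subst hx; subst hz0
            ext i j; fin_cases i <;> fin_cases j <;> simp
          · right
            have hz : z = 1 := by linear_combination hz1
            subst hz
            have hx : x = 0 := by
              have hx2 : x ^ 2 = 0 := by linear_combination hh1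
              exact pow_eq_zero_iff (by norm_num) |>.mp hx2
            subst hx
            ext i j; fin_cases i <;> fin_cases j <;> simp
        · exfalso
          exact hns x (by linear_combination hh1 + b * hz3)
      · exfalso
        have hQ0T : (b * (x - w) + a * (2 * b * z - 2 * y + a * (x - w))) *
            (y - b * z + a * w - b) = 0 := by
          linear_combination (b + a ^ 2) * hE00 - 2 * a * hE01 + 2 * a * b * hE10 -
            (b + a ^ 2) * hE11 +
            (-(w * a ^ 2) + z * a * b - y * a - y * z * a + x * w * a) * ha2
        have hQ1T : (2 * y - a * (x - w) - b * z) * (y - b * z + a * w - b) = 0 := by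
          linear_combination (-a) * hE00 + 2 * hE01 + (2 * b - a ^ 2) * hE10 + a * hE11 +
            (-(z * b) + z * w * a - z ^ 2 * b + y * z) * ha2
        have hT : y - b * z + a * w - b = 0 := by
          rcases not_and_or.mp hc with h | h
          · exact (mul_eq_zero.mp hQ0T).resolve_left h
          · exact (mul_eq_zero.mp hQ1T).resolve_left h
        have hxw : (4 * b) * (x + w - a) = 0 := by
          linear_combination 4 * hE11 + (4 * a - 4 * w) * hT
        have hw : w = a - x := by
          have h' := (mul_eq_zero.mp hxw).resolve_left (mul_ne_zero h4 hb)
          linear_combination h'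
        subst hw
        have hy : y = b * z + a * x - 2 * b := by linear_combination hT - ha2
        subst hy
        have hNq : x ^ 2 + a * x * (z - 1) + b * (z - 1) ^ 2 = 0 := by
          linear_combination -hE10 + (z - 1) * ha2
        by_cases hz1 : z = 1
        · subst hz1
          have hx : x = 0 := by
            have hx2 : x ^ 2 = 0 := by linear_combination hNq
            exact pow_eq_zero_iff (by norm_num) |>.mp hx2
          exact hc ⟨by linear_combination 2 * b * hx - a * ha2, by linear_combination ha2⟩
        · have hzz : z - 1 ≠ 0 := sub_ne_zero.mpr hz1
          apply hns ((2 * x + a * (z - 1)) / (z - 1))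
          field_simp
          linear_combination 4 * hNq + (z - 1) ^ 2 * ha2
    · rintro (rfl | rfl)
      · simp
      · rfl
  refine ⟨hset, ?_⟩
  rw [hset, Nat.card_coe_set_eq, Set.ncard_pair hA0]
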